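/- Let A be a unital commutative semisimple regular Banach algebra over ℂ, M a Banach A-module, x ∈ M and a ∈ A. Then Supp(x) ⊆ null(a) if and only if ‖aⁿ·x‖^{1/n} → 0 as n → ∞. -/

import Mathlib

open WeakDual Filter

/-- Every proper ideal of a commutative unital complex Banach algebra is annihilated by
some character. -/
lemma exists_char_vanishing_of_ne_top {A : Type*} [NormedCommRing A] [NormedAlgebra ℂ A]
    [CompleteSpace A] {J : Ideal A} (hJ : J ≠ ⊤) :
    ∃ χ : characterSpace ℂ A, ∀ v ∈ J, χ v = 0 := by
  obtain ⟨m, hm, hle⟩ := J.exists_le_maximal hJ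
  haveI := hm
  exact ⟨m.toCharacterSpace, fun v hv => m.toCharacterSpace_apply_eq_zero_of_mem (hle hv)⟩

/-- For a Banach module `M` over a unital commutative semisimple regular Banach algebra `A`,
an element `x ∈ M` and `a ∈ A`, one has `Supp x ⊆ null a` if and only if
`‖aⁿ • x‖ ^ (1/n) → 0` as `n → ∞`. -/
theorem supp_subset_null_iff_norm_pow_smul_tendsto_zero
    {A : Type*} [NormedCommRing A] [NormedAlgebra ℂ A] [CompleteSpace A]
    (hss : ∀ b : A, (∀ χ : characterSpace ℂ A, χ b = 0) → b = 0)
    (hreg : ∀ E : Set (characterSpace ℂ A), IsClosed E →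
      ∀ χ : characterSpace ℂ A, χ ∉ E → ∃ b : A, (∀ ψ ∈ E, ψ b = 0) ∧ χ b = 1)
    {M : Type*} [NormedAddCommGroup M] [Module A M] [CompleteSpace M]
    (hM : ∃ C : ℝ, ∀ (b : A) (y : M), ‖b • y‖ ≤ C * ‖b‖ * ‖y‖)
    (x : M) (a : A) :
    {χ : characterSpace ℂ A | ∀ b : A, b • x = 0 → χ b = 0} ⊆
        {χ : characterSpace ℂ A | χ a = 0} ↔
      Tendsto (fun n : ℕ => ‖(a ^ n) • x‖ ^ ((1 : ℝ) / n)) atTop (nhds 0) := by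
  obtain ⟨C₀, hC₀⟩ := hM
  set C : ℝ := max C₀ 1 with hCdef
  have hC1 : (1 : ℝ) ≤ C := le_max_right _ _
  have hC0 : (0 : ℝ) < C := lt_of_lt_of_le one_pos hC1
  have hC : ∀ (b : A) (y : M), ‖b • y‖ ≤ C * ‖b‖ * ‖y‖ := by
    intro b y
    refine (hC₀ b y).trans ?_
    have : C₀ * ‖b‖ ≤ C * ‖b‖ :=
      mul_le_mul_of_nonneg_right (le_max_left _ _) (norm_nonneg b)
    exact mul_le_mul_of_nonneg_right this (norm_nonneg y)
  have heval : Continuous fun ψ : characterSpace ℂ A => ψ a :=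
    (WeakDual.eval_continuous a).comp continuous_subtype_val
  constructor
  · -- forward direction
    intro h
    by_cases hx : x = 0
    · subst hx
      have hev : ∀ᶠ n : ℕ in atTop,
          (0 : ℝ) = ‖(a ^ n) • (0 : M)‖ ^ ((1 : ℝ) / n) := by
        filter_upwards [eventually_ge_atTop 1] with n hn
        have hn' : ((n : ℝ)) ≠ 0 := Nat.cast_ne_zero.mpr (by omega)
        rw [smul_zero, norm_zero, Real.zero_rpow (one_div_ne_zero hn')]
      exact Tendsto.congr' hev tendsto_const_nhds
    · -- the annihilator ideal of x
      set I : Ideal A := LinearMap.ker (LinearMap.toSpanSingleton A M x) with hIdef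
      have hmemI : ∀ b : A, b ∈ I ↔ b • x = 0 := by
        intro b
        simp [hIdef, LinearMap.mem_ker, LinearMap.toSpanSingleton_apply]
      haveI hIc : IsClosed (I : Set A) := by
        have hcont : Continuous fun b : A => b • x := by
          refine AddMonoidHomClass.continuous_of_bound
            (AddMonoidHom.mk' (fun b : A => b • x) (fun b b' => add_smul b b' x))
            (C * ‖x‖) ?_
          intro b
          calc ‖b • x‖ ≤ C * ‖b‖ * ‖x‖ := hC b x
            _ = C * ‖x‖ * ‖b‖ := by ring
        have : (I : Set A) = (fun b : A => b • x) ⁻¹' {0} := by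
          ext b; simp [hmemI b]
        rw [this]
        exact IsClosed.preimage hcont isClosed_singleton
      -- spectrum of the image of a in the quotient is {0}
      have hspec : ∀ z ∈ spectrum ℂ ((Ideal.Quotient.mkₐ ℂ I) a), z = 0 := by
        intro z hz
        rw [spectrum.mem_iff] at hz
        set w : A := algebraMap ℂ A z - a with hwdef
        have hw : (Ideal.Quotient.mkₐ ℂ I) w
            = algebraMap ℂ (A ⧸ I) z - (Ideal.Quotient.mkₐ ℂ I) a := by
          rw [hwdef, map_sub, AlgHom.commutes]
        set J : Ideal A := I ⊔ Ideal.span {w} with hJdef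
        have hJ : J ≠ ⊤ := by
          intro hJtop
          have h1 : (1 : A) ∈ J := hJtop ▸ Submodule.mem_top
          obtain ⟨i, hi, s, hs, his⟩ := Submodule.mem_sup.mp h1
          obtain ⟨c, hc⟩ := Ideal.mem_span_singleton'.mp hs
          have : (1 : A ⧸ I) = (Ideal.Quotient.mkₐ ℂ I) c * (Ideal.Quotient.mkₐ ℂ I) w := by
            calc (1 : A ⧸ I) = (Ideal.Quotient.mkₐ ℂ I) (i + s) := by rw [his]; simp
              _ = (Ideal.Quotient.mkₐ ℂ I) i + (Ideal.Quotient.mkₐ ℂ I) s := map_add _ _ _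
              _ = (Ideal.Quotient.mkₐ ℂ I) s := by
                  rw [Ideal.Quotient.mkₐ_eq_mk, Ideal.Quotient.eq_zero_iff_mem.mpr hi]
                  ring
              _ = (Ideal.Quotient.mkₐ ℂ I) c * (Ideal.Quotient.mkₐ ℂ I) w := by
                  rw [← map_mul, hc]
          exact hz (by
            rw [← hw]
            exact IsUnit.of_mul_eq_one ((Ideal.Quotient.mkₐ ℂ I) c)
              (by rw [mul_comm]; exact this.symm))
        obtain ⟨χ, hχ⟩ := exists_char_vanishing_of_ne_top hJ
        have hχsupp : χ ∈ {χ : characterSpace ℂ A | ∀ b : A, b • x = 0 → χ b = 0} := by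
          intro b hb
          exact hχ b (Submodule.mem_sup_left ((hmemI b).mpr hb))
        have hχa : χ a = 0 := h hχsupp
        have hχw : χ w = 0 :=
          hχ w (Submodule.mem_sup_right (Ideal.subset_span (Set.mem_singleton w)))
        rw [hwdef, map_sub, hχa, sub_zero, AlgHomClass.commutes] at hχw
        exact hχw
      have hrad : spectralRadius ℂ ((Ideal.Quotient.mkₐ ℂ I) a) = 0 := by
        rw [spectralRadius]
        refine le_antisymm (iSup₂_le fun k hk => ?_) (zero_le)
        rw [hspec k hk]
        simp
      have htq : Tendsto
          (fun n : ℕ => ‖((Ideal.Quotient.mkₐ ℂ I) a) ^ n‖ ^ ((1 : ℝ) / n)) atTop (nhds 0) := by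
        have h1 := spectrum.pow_norm_pow_one_div_tendsto_nhds_spectralRadius
          ((Ideal.Quotient.mkₐ ℂ I) a)
        rw [hrad] at h1
        have h2 := (ENNReal.tendsto_toReal (by simp : (0 : ENNReal) ≠ ⊤)).comp h1
        simp only [ENNReal.toReal_zero] at h2
        refine h2.congr fun n => ?_
        simp only [Function.comp_apply]
        exact ENNReal.toReal_ofReal (Real.rpow_nonneg (norm_nonneg _) _)
      -- key norm inequality
      have key : ∀ n : ℕ, ‖(a ^ n) • x‖ ≤ C * ‖x‖ * ‖((Ideal.Quotient.mkₐ ℂ I) a) ^ n‖ := by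
        intro n
        have hxpos : (0 : ℝ) < ‖x‖ := norm_pos_iff.mpr hx
        have hCx : (0 : ℝ) < C * ‖x‖ := mul_pos hC0 hxpos
        refine le_of_forall_pos_le_add ?_
        intro ε hε
        obtain ⟨r, hr, hrn⟩ := Ideal.Quotient.norm_mk_lt
          ((Ideal.Quotient.mk I) (a ^ n)) (div_pos hε hCx)
        have hrx : r • x = (a ^ n) • x := by
          have hmem : r - a ^ n ∈ I := Ideal.Quotient.eq.mp hr
          have := (hmemI _).mp hmem
          rw [sub_smul, sub_eq_zero] at this
          exact this
        have h3 : ‖(Ideal.Quotient.mk I) (a ^ n)‖ = ‖((Ideal.Quotient.mkₐ ℂ I) a) ^ n‖ := by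
          rw [Ideal.Quotient.mkₐ_eq_mk, ← map_pow]
        calc ‖(a ^ n) • x‖ = ‖r • x‖ := by rw [hrx]
          _ ≤ C * ‖r‖ * ‖x‖ := hC r x
          _ = C * ‖x‖ * ‖r‖ := by ring
          _ ≤ C * ‖x‖ * (‖(Ideal.Quotient.mk I) (a ^ n)‖ + ε / (C * ‖x‖)) :=
              mul_le_mul_of_nonneg_left hrn.le hCx.le
          _ = C * ‖x‖ * ‖(Ideal.Quotient.mk I) (a ^ n)‖ + ε := by
              field_simp
          _ = C * ‖x‖ * ‖((Ideal.Quotient.mkₐ ℂ I) a) ^ n‖ + ε := by rw [h3]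
      -- squeeze
      set K : ℝ := max (C * ‖x‖) 1 with hKdef
      have hK1 : (1 : ℝ) ≤ K := le_max_right _ _
      have hK0 : (0 : ℝ) ≤ K := le_trans zero_le_one hK1
      refine squeeze_zero' (Eventually.of_forall fun n => Real.rpow_nonneg (norm_nonneg _) _)
        ?_ (by have h' := htq.const_mul K; rwa [mul_zero] at h')
      filter_upwards [eventually_ge_atTop 1] with n hn
      have hn' : (0 : ℝ) < (n : ℝ) := by exact_mod_cast (by omega : 0 < n)
      have h1n0 : (0 : ℝ) ≤ 1 / (n : ℝ) := by positivity
      have h1n1 : (1 : ℝ) / (n : ℝ) ≤ 1 := by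
        rw [div_le_one hn']
        exact_mod_cast hn
      have step1 : ‖(a ^ n) • x‖ ^ ((1 : ℝ) / n)
          ≤ (K * ‖((Ideal.Quotient.mkₐ ℂ I) a) ^ n‖) ^ ((1 : ℝ) / n) := by
        refine Real.rpow_le_rpow (norm_nonneg _) ?_ h1n0
        refine (key n).trans ?_
        exact mul_le_mul_of_nonneg_right (le_max_left _ _) (norm_nonneg _)
      refine step1.trans ?_
      rw [Real.mul_rpow hK0 (norm_nonneg _)]
      refine mul_le_mul_of_nonneg_right ?_
        (Real.rpow_nonneg (norm_nonneg (((Ideal.Quotient.mkₐ ℂ I) a) ^ n)) _)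
      calc K ^ ((1 : ℝ) / n) ≤ K ^ (1 : ℝ) :=
            Real.rpow_le_rpow_of_exponent_le hK1 h1n1
        _ = K := Real.rpow_one K
  · -- reverse direction
    intro htend χ hχ
    by_contra hla
    set lam : ℂ := χ a with hlamdef
    have hlam : lam ≠ 0 := hla
    have hlampos : (0 : ℝ) < ‖lam‖ := norm_pos_iff.mpr hlam
    set E : Set (characterSpace ℂ A) := {ψ | ‖lam‖ / 2 ≤ ‖ψ a - lam‖} with hEdef
    have hEc : IsClosed E :=
      isClosed_le continuous_const ((heval.sub continuous_const).norm)
    have hχE : χ ∉ E := by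
      simp only [hEdef, Set.mem_setOf_eq, ← hlamdef, sub_self, norm_zero, not_le]
      linarith
    obtain ⟨b, hbE, hbχ⟩ := hreg E hEc χ hχE
    set S : Set (characterSpace ℂ A) := closure {ψ | ψ b ≠ 0} with hSdef
    have hS : ∀ ψ ∈ S, ‖lam‖ / 2 ≤ ‖(ψ : characterSpace ℂ A) a‖ := by
      have hsub : S ⊆ {ψ : characterSpace ℂ A | ‖ψ a - lam‖ ≤ ‖lam‖ / 2} := by
        refine closure_minimal ?_ (isClosed_le ((heval.sub continuous_const).norm)
          continuous_const)
        intro ψ hψ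
        by_contra hc
        simp only [Set.mem_setOf_eq, not_le] at hc
        exact hψ (hbE ψ (le_of_lt hc))
      intro ψ hψ
      have h1 := hsub hψ
      simp only [Set.mem_setOf_eq] at h1
      have h2 : ‖lam‖ - ‖(ψ : characterSpace ℂ A) a‖ ≤ ‖ψ a - lam‖ := by
        calc ‖lam‖ - ‖(ψ : characterSpace ℂ A) a‖ ≤ ‖lam - ψ a‖ := norm_sub_norm_le _ _
          _ = ‖ψ a - lam‖ := norm_sub_rev _ _
      linarith
    -- the ideal generated by a and the annihilator of b is everything
    set J : Ideal A := Ideal.span {a} ⊔ LinearMap.ker (LinearMap.toSpanSingleton A A b)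
      with hJdef
    have hJ : J = ⊤ := by
      by_contra hJne
      obtain ⟨ψ, hψ⟩ := exists_char_vanishing_of_ne_top hJne
      have hψa : ψ a = 0 :=
        hψ a (Submodule.mem_sup_left (Ideal.subset_span (Set.mem_singleton a)))
      have hψS : ψ ∉ S := by
        intro hmem
        have := hS ψ hmem
        rw [hψa, norm_zero] at this
        linarith
      obtain ⟨d, hdS, hdψ⟩ := hreg S isClosed_closure ψ hψS
      have hdb : d * b = 0 := by
        refine hss (d * b) fun φ => ?_
        rw [map_mul]
        by_cases hφ : φ b = 0
        · rw [hφ, mul_zero]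
        · rw [hdS φ (subset_closure hφ), zero_mul]
      have hdJ : d ∈ J := by
        refine Submodule.mem_sup_right ?_
        rw [LinearMap.mem_ker, LinearMap.toSpanSingleton_apply, smul_eq_mul, hdb]
      rw [hψ d hdJ] at hdψ
      exact zero_ne_one hdψ
    have h1J : (1 : A) ∈ J := hJ ▸ Submodule.mem_top
    obtain ⟨y, hy, z, hz, hyz⟩ := Submodule.mem_sup.mp h1J
    obtain ⟨c, hc⟩ := Ideal.mem_span_singleton'.mp hy
    have hzb : z * b = 0 := by
      have := LinearMap.mem_ker.mp hz
      rwa [LinearMap.toSpanSingleton_apply, smul_eq_mul] at this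
    have hone : c * a + z = 1 := by rw [hc, hyz]
    have hstep : b = c * a * b := by
      calc b = (c * a + z) * b := by rw [hone, one_mul]
        _ = c * a * b + z * b := by ring
        _ = c * a * b := by rw [hzb, add_zero]
    have hpow : ∀ n : ℕ, b = c ^ n * a ^ n * b := by
      intro n
      induction n with
      | zero => simp
      | succ m ih =>
        calc b = c ^ m * a ^ m * b := ih
          _ = c ^ m * a ^ m * (c * a * b) := by rw [← hstep]
          _ = c ^ (m + 1) * a ^ (m + 1) * b := by ring
    -- conclude b • x = 0
    have hbx : b • x = 0 := by
      have hcpos : (0 : ℝ) < 2 * (‖c‖ + 1) := by positivity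
      set ε : ℝ := 1 / (2 * (‖c‖ + 1)) with hεdef
      have hε : (0 : ℝ) < ε := by positivity
      have hbound : ∀ᶠ n : ℕ in atTop, ‖b • x‖ ≤ C * ‖b‖ * (1 / 2) ^ n := by
        filter_upwards [htend.eventually_lt_const hε, eventually_ge_atTop 1] with n hlt hn
        have hnpos : 0 < n := by omega
        have hn0 : ((n : ℝ)) ≠ 0 := Nat.cast_ne_zero.mpr (by omega)
        have hanx : ‖(a ^ n) • x‖ ≤ ε ^ n := by
          have h1 : ‖(a ^ n) • x‖ = (‖(a ^ n) • x‖ ^ ((1 : ℝ) / n)) ^ n := by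
            rw [← Real.rpow_natCast (‖(a ^ n) • x‖ ^ ((1 : ℝ) / n)) n,
              ← Real.rpow_mul (norm_nonneg _), one_div_mul_cancel hn0, Real.rpow_one]
          rw [h1]
          exact pow_le_pow_left₀ (Real.rpow_nonneg (norm_nonneg _) _) hlt.le n
        have hmul : b • x = (c ^ n * b) • ((a ^ n) • x) := by
          rw [← mul_smul]
          nth_rewrite 1 [hpow n]
          ring_nf
        calc ‖b • x‖ = ‖(c ^ n * b) • ((a ^ n) • x)‖ := by rw [← hmul]
          _ ≤ C * ‖c ^ n * b‖ * ‖(a ^ n) • x‖ := hC _ _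
          _ ≤ C * (‖c‖ ^ n * ‖b‖) * ε ^ n := by
              refine mul_le_mul ?_ hanx (norm_nonneg _) (by positivity)
              refine mul_le_mul_of_nonneg_left ?_ hC0.le
              exact (norm_mul_le _ _).trans
                (mul_le_mul_of_nonneg_right (norm_pow_le' c hnpos) (norm_nonneg b))
          _ = C * ‖b‖ * (‖c‖ * ε) ^ n := by rw [mul_pow]; ring
          _ ≤ C * ‖b‖ * (1 / 2) ^ n := by
              refine mul_le_mul_of_nonneg_left ?_ (by positivity)
              refine pow_le_pow_left₀ (by positivity) ?_ n
              rw [hεdef, mul_one_div, div_le_div_iff₀ hcpos two_pos]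
              nlinarith [norm_nonneg c]
        -- end calc
      have htend2 : Tendsto (fun n : ℕ => C * ‖b‖ * (1 / 2) ^ n) atTop (nhds 0) := by
        have := tendsto_pow_atTop_nhds_zero_of_lt_one (by norm_num : (0:ℝ) ≤ 1/2)
          (by norm_num : (1:ℝ)/2 < 1)
        simpa using this.const_mul (C * ‖b‖)
      have : ‖b • x‖ ≤ 0 := ge_of_tendsto htend2 hbound
      exact norm_le_zero_iff.mp this
    have := hχ b hbx
    rw [hbχ] at this
    exact one_ne_zero this
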